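/- arXiv:1205.1455 — 2 statements merged into one kernel-verified Lean document; each statement's English description precedes it below -/
import Mathlib

section
/- Let R = ℚ[x₁,…,x_n] and let P₁,…,P_n ∈ R be polynomials with no constant or linear terms such that M = R/(P₁,…,P_n) has finite length. Then dim_ℚ M ≥ 1 + n + (C(n+1,2) − n) = n(n+1)/2 + 1, and in particular dim_ℚ M ≥ 2n. -/
open MvPolynomial Module Submodule

namespace Stmt8Aux

variable {n : ℕ}

lemma degree_eq_card (d : Fin n →₀ ℕ) :
    d.degree = Multiset.card (Finsupp.toMultiset d) := by
  rw [Finsupp.card_toMultiset]; rfl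

lemma degree_add (a b : Fin n →₀ ℕ) : (a + b).degree = a.degree + b.degree := by
  simp [degree_eq_card, map_add]

lemma degree_single (i : Fin n) (k : ℕ) : (Finsupp.single i k).degree = k := by
  simp [degree_eq_card, Finsupp.toMultiset_single]

lemma degree_le_one {d : Fin n →₀ ℕ} (h : d.degree ≤ 1) :
    d = 0 ∨ ∃ i, d = Finsupp.single i 1 := by
  rw [degree_eq_card] at h
  interval_cases hc : Multiset.card (Finsupp.toMultiset d)
  · left
    rw [Multiset.card_eq_zero] at hc
    have := congrArg Multiset.toFinsupp hc
    simpa [Finsupp.toMultiset_toFinsupp] using this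
  · right
    rw [Multiset.card_eq_one] at hc
    obtain ⟨a, ha⟩ := hc
    refine ⟨a, ?_⟩
    have := congrArg Multiset.toFinsupp ha
    simpa [Finsupp.toMultiset_toFinsupp] using this

/-- Truncation to total degree ≤ 2, as a linear map. -/
noncomputable def T (n : ℕ) : MvPolynomial (Fin n) ℚ →ₗ[ℚ] MvPolynomial (Fin n) ℚ :=
  homogeneousComponent 0 + homogeneousComponent 1 + homogeneousComponent 2

lemma coeff_T (f : MvPolynomial (Fin n) ℚ) (d : Fin n →₀ ℕ) :
    coeff d (T n f) = if d.degree ≤ 2 then coeff d f else 0 := by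
  simp only [T, LinearMap.add_apply, coeff_add, coeff_homogeneousComponent]
  by_cases h2 : d.degree ≤ 2
  · rcases (by omega : d.degree = 0 ∨ d.degree = 1 ∨ d.degree = 2) with h | h | h <;> simp [h]
  · have h0 : d.degree ≠ 0 := by omega
    have h1 : d.degree ≠ 1 := by omega
    have h2' : d.degree ≠ 2 := by omega
    simp [h0, h1, h2', h2]

lemma T_monomial {d : Fin n →₀ ℕ} (hd : d.degree ≤ 2) (c : ℚ) :
    T n (monomial d c) = monomial d c := by
  ext d'
  rw [coeff_T]
  by_cases h : d' = d
  · subst h; simp [hd]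
  · simp [coeff_monomial, Ne.symm h, if_neg h]

lemma T_mul (g f : MvPolynomial (Fin n) ℚ)
    (hf : ∀ d : Fin n →₀ ℕ, d.degree ≤ 1 → coeff d f = 0) :
    T n (g * f) = constantCoeff g • T n f := by
  classical
  ext d
  rw [MvPolynomial.coeff_smul, coeff_T, coeff_T]
  by_cases hd : d.degree ≤ 2
  · rw [if_pos hd, if_pos hd, MvPolynomial.coeff_mul]
    rw [Finset.sum_eq_single ((0 : Fin n →₀ ℕ), d)]
    · simp [constantCoeff_eq]
    · rintro ⟨a, b⟩ hab hne
      rw [Finset.HasAntidiagonal.mem_antidiagonal] at hab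
      have ha : a ≠ 0 := by
        rintro rfl
        exact hne (by simp [← hab])
      have ha' : 1 ≤ a.degree := by
        rcases Nat.eq_zero_or_pos a.degree with h0 | h1
        · exact absurd (Finsupp.degree_eq_zero_iff a |>.mp h0) ha
        · exact h1
      have hb : b.degree ≤ 1 := by
        have := degree_add a b
        rw [hab] at this
        omega
      rw [hf b hb, mul_zero]
    · intro hmem
      exact absurd (Finset.HasAntidiagonal.mem_antidiagonal.mpr (by simp)) hmem
  · rw [if_neg hd, if_neg hd, smul_zero]

lemma stmt8_arith (n : ℕ) : 2 * n ≤ n * (n + 1) / 2 + 1 := by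
  have heven : n * (n + 1) / 2 * 2 = n * (n + 1) :=
    Nat.div_mul_cancel (Nat.even_mul_succ_self n).two_dvd
  have hexp : n * (n + 1) = n * n + n := by ring
  rcases Nat.lt_or_ge n 3 with h | h
  · interval_cases n <;> omega
  · have h3 : 3 * n ≤ n * n := Nat.mul_le_mul_right n h
    omega

end Stmt8Aux

open Stmt8Aux

/-- Let `R = ℚ[x₁,…,xₙ]` and let `P₁,…,Pₙ ∈ R` be polynomials with no constant or linear
terms such that `M = R/(P₁,…,Pₙ)` has finite length (equivalently, is finite-dimensional
over `ℚ`). Then `dim_ℚ M ≥ n(n+1)/2 + 1 = 1 + n + (C(n+1,2) − n)`, and in particular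
`dim_ℚ M ≥ 2n`. -/
theorem stmt_8 (n : ℕ) (P : Fin n → MvPolynomial (Fin n) ℚ)
    (hconst : ∀ j, MvPolynomial.constantCoeff (P j) = 0)
    (hlin : ∀ j (i : Fin n), MvPolynomial.coeff (Finsupp.single i 1) (P j) = 0)
    (hfl : FiniteDimensional ℚ (MvPolynomial (Fin n) ℚ ⧸ Ideal.span (Set.range P))) :
    Module.finrank ℚ (MvPolynomial (Fin n) ℚ ⧸ Ideal.span (Set.range P)) ≥ n * (n + 1) / 2 + 1 ∧
    Module.finrank ℚ (MvPolynomial (Fin n) ℚ ⧸ Ideal.span (Set.range P)) ≥ 2 * n := by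
  classical
  set I := Ideal.span (Set.range P) with hI
  set U : Submodule ℚ (MvPolynomial (Fin n) ℚ) :=
    Submodule.span ℚ (Set.range fun j => T n (P j)) with hU
  -- every element of U has vanishing coefficients in degrees ≤ 1
  have hUlow : ∀ f ∈ U, ∀ d : Fin n →₀ ℕ, d.degree ≤ 1 → coeff d f = 0 := by
    intro f hf
    refine Submodule.span_induction ?_ ?_ ?_ ?_ hf
    · rintro _ ⟨j, rfl⟩ d hd
      rw [coeff_T, if_pos (by omega)]
      rcases degree_le_one hd with rfl | ⟨i, rfl⟩
      · have := hconst j; rwa [constantCoeff_eq] at this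
      · exact hlin j i
    · intro d hd; simp
    · intro x y _ _ hx hy d hd; rw [coeff_add, hx d hd, hy d hd, add_zero]
    · intro c x _ hx d hd; rw [MvPolynomial.coeff_smul, hx d hd, smul_zero]
  -- truncations of elements of I lie in U
  have hTI : ∀ f ∈ I, T n f ∈ U := by
    intro f hf
    refine Submodule.span_induction ?_ ?_ ?_ ?_ hf
    · rintro _ ⟨j, rfl⟩; exact Submodule.subset_span ⟨j, rfl⟩
    · simp
    · intro x y _ _ hx hy; rw [map_add]; exact U.add_mem hx hy
    · intro r x _ hx
      rw [smul_eq_mul, T_mul r x ?_]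
      · exact U.smul_mem _ hx
      · intro d hd
        have h1 : coeff d (T n x) = 0 := hUlow _ hx d hd
        rwa [coeff_T, if_pos (by omega)] at h1
  -- the family of monomials of degree ≤ 2
  let ι := Option ((Fin n) ⊕ Sym (Fin n) 2)
  let e : ι → (Fin n →₀ ℕ) := fun i => match i with
    | none => 0
    | some (Sum.inl i) => Finsupp.single i 1
    | some (Sum.inr s) => Multiset.toFinsupp s.1
  have hdeg : ∀ i : ι, (e i).degree ≤ 2 := by
    rintro (_ | i | s)
    · simp [e]
    · simp [e, degree_single]
    · simp [e, degree_eq_card, Multiset.toFinsupp_toMultiset, s.2]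
  have hdege : ∀ s : Sym (Fin n) 2, (Multiset.toFinsupp s.1).degree = 2 := by
    intro s
    simp [degree_eq_card, Multiset.toFinsupp_toMultiset, s.2]
  have he : Function.Injective e := by
    have hc2 : ∀ a : ι, Multiset.card (Finsupp.toMultiset (e a)) =
        (match a with | none => 0 | some (Sum.inl _) => 1 | some (Sum.inr _) => 2) := by
      rintro (_ | (i | s))
      · simp [e]
      · simp [e, Finsupp.toMultiset_single]
      · simp [e, s.2]
    intro a b hab
    have hcc := (hc2 a).symm.trans (by rw [hab, hc2 b])
    rcases a with _ | (i | s) <;> rcases b with _ | (j | t)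
    · rfl
    · exact ((by decide : (0:ℕ) ≠ 1) hcc).elim
    · exact ((by decide : (0:ℕ) ≠ 2) hcc).elim
    · exact ((by decide : (1:ℕ) ≠ 0) hcc).elim
    · have hm := congrArg Finsupp.toMultiset hab
      simp only [e, Finsupp.toMultiset_single, one_nsmul, one_smul] at hm
      rw [Multiset.singleton_inj] at hm
      exact congrArg _ (congrArg _ hm)
    · exact ((by decide : (1:ℕ) ≠ 2) hcc).elim
    · exact ((by decide : (2:ℕ) ≠ 0) hcc).elim
    · exact ((by decide : (2:ℕ) ≠ 1) hcc).elim
    · have hm := congrArg Finsupp.toMultiset hab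
      simp only [e, Multiset.toFinsupp_toMultiset] at hm
      exact congrArg _ (congrArg _ (Sym.coe_injective hm))
  have hli : LinearIndependent ℚ (fun i : ι => (monomial (e i) (1 : ℚ))) := by
    have h2 := (basisMonomials (Fin n) ℚ).linearIndependent.comp e he
    rw [coe_basisMonomials] at h2
    exact h2
  -- cardinality
  have hsym : Fintype.card (Sym (Fin n) 2) = n * (n + 1) / 2 := by
    rw [Sym.card_sym_eq_multichoose, Nat.multichoose_eq, Fintype.card_fin]
    have h1 : n + 2 - 1 = n + 1 := rfl
    rw [h1, Nat.choose_two_right]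
    have h2 : n + 1 - 1 = n := rfl
    rw [h2, Nat.mul_comm]
  have hcard : Fintype.card ι = n + n * (n + 1) / 2 + 1 := by
    simp [ι, Fintype.card_option, Fintype.card_sum, hsym]
  -- the subspace spanned by these monomials
  let V₂ : Submodule ℚ (MvPolynomial (Fin n) ℚ) :=
    Submodule.span ℚ (Set.range fun i : ι => monomial (e i) (1 : ℚ))
  haveI : FiniteDimensional ℚ V₂ := FiniteDimensional.span_of_finite ℚ (Set.finite_range _)
  have hV₂ : Module.finrank ℚ V₂ = n + n * (n + 1) / 2 + 1 := by
    rw [finrank_span_eq_card hli, hcard]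
  have hfix : ∀ f ∈ V₂, T n f = f := by
    intro f hf
    refine Submodule.span_induction ?_ ?_ ?_ ?_ hf
    · rintro _ ⟨i, rfl⟩; exact T_monomial (hdeg i) 1
    · simp
    · intro x y _ _ hx hy; rw [map_add, hx, hy]
    · intro c x _ hx; rw [map_smul, hx]
  -- quotient map as linear map
  let mkl : MvPolynomial (Fin n) ℚ →ₗ[ℚ] (MvPolynomial (Fin n) ℚ ⧸ I) :=
    (Ideal.Quotient.mkₐ ℚ I).toLinearMap
  let g := mkl.domRestrict V₂
  haveI : FiniteDimensional ℚ U := FiniteDimensional.span_of_finite ℚ (Set.finite_range _)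
  have hUn : Module.finrank ℚ U ≤ n := by
    have := finrank_range_le_card (R := ℚ) (fun j : Fin n => T n (P j))
    simpa [Set.finrank] using this
  -- kernel of g injects into U
  have hkermem : ∀ c : LinearMap.ker g, ((c : V₂) : MvPolynomial (Fin n) ℚ) ∈ U := by
    rintro ⟨⟨x, hxV⟩, hxk⟩
    have hxI : x ∈ I := by
      have : mkl x = 0 := hxk
      rwa [show mkl x = Ideal.Quotient.mk I x from rfl,
        Ideal.Quotient.eq_zero_iff_mem] at this
    have := hTI x hxI
    rwa [hfix x hxV] at this
  let φ : LinearMap.ker g →ₗ[ℚ] U :=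
    LinearMap.codRestrict U (V₂.subtype.comp (LinearMap.ker g).subtype) hkermem
  have hφ : Function.Injective φ := by
    intro a b hab
    have h2 := congrArg Subtype.val hab
    exact Subtype.ext (Subtype.ext h2)
  have hker : Module.finrank ℚ (LinearMap.ker g) ≤ n :=
    le_trans (LinearMap.finrank_le_finrank_of_injective hφ) hUn
  have hrn := LinearMap.finrank_range_add_finrank_ker g
  have hrange : Module.finrank ℚ (LinearMap.range g) ≤
      Module.finrank ℚ (MvPolynomial (Fin n) ℚ ⧸ I) := Submodule.finrank_le _
  rw [hV₂] at hrn
  have main : Module.finrank ℚ (MvPolynomial (Fin n) ℚ ⧸ I) ≥ n * (n + 1) / 2 + 1 := by omega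
  exact ⟨main, le_trans (stmt8_arith n) main⟩
end

section
/- Let (V, d) be a finite-dimensional cochain complex of ℚ-vector spaces and let D be a differential on V ⊗ ℚ[t] that is ℚ[t]-linear, specializing to d at t = 0 and to d_ξ at t = ξ. Then for all but finitely many ξ ∈ ℚ, dim_ℚ H(V, d_ξ) ≤ dim_ℚ H(V, d). -/
open Polynomial
open Matrix

private lemma stmt16_key (m : ℕ) (M N : Matrix (Fin m) (Fin m) ℚ) (h : N.rank ≤ M.rank) :
    Module.finrank ℚ (LinearMap.ker (Matrix.toLin' M)) -
        Module.finrank ℚ (LinearMap.range (Matrix.toLin' M)) ≤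
      Module.finrank ℚ (LinearMap.ker (Matrix.toLin' N)) -
        Module.finrank ℚ (LinearMap.range (Matrix.toLin' N)) := by
  rw [Matrix.toLin'_apply', Matrix.toLin'_apply']
  have hM := LinearMap.finrank_range_add_finrank_ker M.mulVecLin
  have hN := LinearMap.finrank_range_add_finrank_ker N.mulVecLin
  rw [Module.finrank_fin_fun] at hM hN
  have hM' : Module.finrank ℚ (LinearMap.range M.mulVecLin) = M.rank := rfl
  have hN' : Module.finrank ℚ (LinearMap.range N.mulVecLin) = N.rank := rfl
  omega

/-- Let `(V, d)` be a finite-dimensional (co)chain complex of `ℚ`-vector spaces, presented by a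
square-zero matrix `D` over `ℚ[t]` acting on `V ⊗ ℚ[t] ≅ ℚ[t]^m`, i.e. a `ℚ[t]`-linear
differential; its specialization at `t = ξ` is the matrix `D.map (eval ξ)`, with homology
dimension `dim ker d_ξ − dim im d_ξ`. Then for all but finitely many `ξ ∈ ℚ`,
`dim_ℚ H(V, d_ξ) ≤ dim_ℚ H(V, d₀)`. -/
theorem stmt_16 (m : ℕ) (D : Matrix (Fin m) (Fin m) (Polynomial ℚ))
    (hD : D * D = 0) :
    {ξ : ℚ | ¬ (Module.finrank ℚ (LinearMap.ker (Matrix.toLin' (D.map (eval ξ)))) -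
        Module.finrank ℚ (LinearMap.range (Matrix.toLin' (D.map (eval ξ)))) ≤
      Module.finrank ℚ (LinearMap.ker (Matrix.toLin' (D.map (eval (0 : ℚ))))) -
        Module.finrank ℚ (LinearMap.range (Matrix.toLin' (D.map (eval (0 : ℚ))))))}.Finite := by
  classical
  set D0 : Matrix (Fin m) (Fin m) ℚ := D.map (eval (0 : ℚ)) with hD0
  set s : ℕ := D0.rank with hsdef
  -- choose a linearly independent family of s columns of D0
  obtain ⟨b, hbsub, hbspan, hbli⟩ := exists_linearIndependent ℚ (Set.range D0ᵀ)
  have hbfin : b.Finite := (Set.finite_range _).subset hbsub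
  haveI : Fintype b := hbfin.fintype
  have hcard : Fintype.card b = s := by
    have := finrank_span_set_eq_card hbli
    rw [hbspan, show Set.range D0ᵀ = Set.range (Matrix.col D0) from rfl, ← Matrix.rank_eq_finrank_span_cols] at this
    rw [Set.toFinset_card] at this
    exact this.symm
  let e : Fin s ≃ b := (Fintype.equivFinOfCardEq hcard).symm
  have hchoice : ∀ i : Fin s, ∃ j : Fin m, D0ᵀ j = (e i : Fin m → ℚ) := fun i => hbsub (e i).2
  choose g hg using hchoice
  -- the Gram determinant polynomial
  set B : Matrix (Fin m) (Fin s) (Polynomial ℚ) := D.submatrix id g with hB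
  set p : Polynomial ℚ := (Bᵀ * B).det with hp
  have hmap : ∀ ξ : ℚ, (Bᵀ * B).map (eval ξ) =
      ((D.map (eval ξ)).submatrix id g)ᵀ * ((D.map (eval ξ)).submatrix id g) := by
    intro ξ
    ext i j
    simp [hB, Matrix.map_apply, Matrix.mul_apply, eval_finset_sum]
  have hpev : ∀ ξ : ℚ, p.eval ξ =
      (((D.map (eval ξ)).submatrix id g)ᵀ * ((D.map (eval ξ)).submatrix id g)).det := by
    intro ξ
    have : p.eval ξ = (evalRingHom ξ) ((Bᵀ * B).det) := rfl
    rw [this, RingHom.map_det, ← hmap ξ]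
    rfl
  -- columns of D0.submatrix id g are linearly independent
  have hcols : (D0.submatrix id g)ᵀ = fun i => (e i : Fin m → ℚ) := by
    funext i j
    have := congrFun (hg i) j
    simpa [Matrix.transpose_apply, Matrix.submatrix_apply] using this
  have hliC : LinearIndependent ℚ (D0.submatrix id g)ᵀ := by
    rw [hcols]
    exact hbli.comp e e.injective
  have hker : LinearMap.ker (D0.submatrix id g).mulVecLin = ⊥ := by
    rw [Matrix.ker_mulVecLin_eq_bot_iff]
    intro v hv
    have hexp : (D0.submatrix id g) *ᵥ v = ∑ i, v i • (D0.submatrix id g)ᵀ i := by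
      ext j
      simp [Matrix.mulVec, dotProduct, Finset.sum_apply, mul_comm]
    funext i
    exact Fintype.linearIndependent_iff.mp hliC v (by rw [← hexp, hv]) i
  -- p(0) ≠ 0
  have hp0 : p.eval 0 ≠ 0 := by
    rw [hpev 0]
    intro hdet
    obtain ⟨v, hv0, hv⟩ := (Matrix.exists_mulVec_eq_zero_iff).mpr hdet
    apply hv0
    have : v ∈ LinearMap.ker ((D0.submatrix id g)ᵀ * (D0.submatrix id g)).mulVecLin := hv
    rw [Matrix.ker_mulVecLin_transpose_mul_self, hker, Submodule.mem_bot] at this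
    exact this
  have hpne : p ≠ 0 := fun h => hp0 (by simp [h])
  -- generic rank bound
  refine Set.Finite.subset (p.finite_setOf_isRoot hpne) ?_
  intro ξ hξ
  by_contra hroot
  apply hξ
  -- p(ξ) ≠ 0, so rank (D.map (eval ξ)) ≥ s
  have hdet : (((D.map (eval ξ)).submatrix id g)ᵀ * ((D.map (eval ξ)).submatrix id g)).det ≠ 0 := by
    rw [← hpev ξ]; exact hroot
  have hunit : IsUnit (((D.map (eval ξ)).submatrix id g)ᵀ * ((D.map (eval ξ)).submatrix id g)) :=
    (Matrix.isUnit_iff_isUnit_det _).mpr (isUnit_iff_ne_zero.mpr hdet)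
  have hrank1 : ((D.map (eval ξ)).submatrix id g).rank = s := by
    rw [← Matrix.rank_transpose_mul_self, Matrix.rank_of_isUnit _ hunit, Fintype.card_fin]
  have hrank2 : s ≤ (D.map (eval ξ)).rank := by
    rw [← hrank1, Matrix.rank_eq_finrank_span_cols, Matrix.rank_eq_finrank_span_cols]
    apply Submodule.finrank_mono
    apply Submodule.span_mono
    rintro x ⟨i, rfl⟩
    exact ⟨g i, rfl⟩
  exact stmt16_key m (D.map (eval ξ)) D0 (by rw [← hsdef]; exact hrank2)
end
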